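/- Let N ≥ 1 and let v ∈ ℝ^N. Suppose that for every index i not in I_max(v) one has v_i ≤ (max_j v_j) − 1. Then for every real c > 0 and every i ∈ {1,…,N}, |softmax(c·v)_i − hardmax(v)_i| ≤ N·e^{−c}. -/
import Mathlib

open scoped BigOperators

/-- softmax(v)_i = exp(v_i) / ∑_j exp(v_j). -/
noncomputable def softmax {n : ℕ} (v : Fin n → ℝ) : Fin n → ℝ :=
  fun i => Real.exp (v i) / ∑ j, Real.exp (v j)

open Classical in
/-- hardmax(v)_i = 1/|I_max(v)| if v_i attains the maximum, and 0 otherwise,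
where the maximum is expressed as `⨆ j, v j` (the supremum over the finite index type). -/
noncomputable def hardmax {n : ℕ} (v : Fin n → ℝ) : Fin n → ℝ :=
  fun i => if v i = ⨆ j, v j then
    1 / ((Finset.univ.filter fun j => v j = ⨆ j', v j').card : ℝ)
  else 0

/-- If every non-maximal entry of `v` is at most the maximum minus 1, then for every `c > 0`
and every index `i`, `|softmax(c • v)_i - hardmax(v)_i| ≤ N · e^{-c}`. -/
theorem softmax_approx_hardmax {N : ℕ} (hN : 1 ≤ N) (v : Fin N → ℝ)
    (hgap : ∀ i : Fin N, v i ≠ (⨆ j, v j) → v i ≤ (⨆ j, v j) - 1) :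
    ∀ c : ℝ, 0 < c → ∀ i : Fin N,
      |softmax (c • v) i - hardmax v i| ≤ (N : ℝ) * Real.exp (-c) := by
  classical
  intro c hc i
  have hN1 : (1:ℝ) ≤ N := by exact_mod_cast hN
  set M := ⨆ j, v j with hMdef
  have hne : Nonempty (Fin N) := ⟨⟨0, hN⟩⟩
  have hbdd : BddAbove (Set.range v) := Set.Finite.bddAbove (Set.finite_range v)
  have hle : ∀ j, v j ≤ M := fun j => le_ciSup hbdd j
  obtain ⟨i0, hi0⟩ := Finite.exists_max v
  have hMi0 : v i0 = M := le_antisymm (hle i0) (ciSup_le hi0)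
  set T := Finset.univ.filter (fun j => v j = M) with hT
  have hi0T : i0 ∈ T := by simp [hT, hMi0]
  have hK1 : 1 ≤ T.card := Finset.card_pos.mpr ⟨i0, hi0T⟩
  have hKpos : (0:ℝ) < T.card := by exact_mod_cast hK1
  have hK1' : (1:ℝ) ≤ T.card := by exact_mod_cast hK1
  set S := ∑ j, Real.exp (c * v j) with hS
  have hSsplit : S = T.card * Real.exp (c * M) + ∑ j ∈ Tᶜ, Real.exp (c * v j) := by
    rw [hS, ← Finset.sum_add_sum_compl T]
    congr 1
    rw [Finset.sum_congr rfl (fun j hj => by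
      simp only [hT, Finset.mem_filter] at hj
      rw [hj.2]), Finset.sum_const, nsmul_eq_mul]
  have hcardc : (Tᶜ.card : ℝ) ≤ N := by
    exact_mod_cast (Finset.card_le_univ _).trans_eq (by simp)
  have hRnn : 0 ≤ ∑ j ∈ Tᶜ, Real.exp (c * v j) :=
    Finset.sum_nonneg fun _ _ => (Real.exp_pos _).le
  have hR : ∑ j ∈ Tᶜ, Real.exp (c * v j) ≤ (N:ℝ) * (Real.exp (c * M) * Real.exp (-c)) := by
    calc ∑ j ∈ Tᶜ, Real.exp (c * v j)
        ≤ ∑ _j ∈ Tᶜ, Real.exp (c*M) * Real.exp (-c) := by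
          apply Finset.sum_le_sum
          intro j hj
          have hjne : v j ≠ M := by
            simp only [hT, Finset.mem_compl, Finset.mem_filter, Finset.mem_univ,
              true_and] at hj
            exact hj
          have hg := hgap j hjne
          rw [← Real.exp_add]
          apply Real.exp_le_exp.mpr
          nlinarith
      _ = Tᶜ.card * (Real.exp (c*M) * Real.exp (-c)) := by
          rw [Finset.sum_const, nsmul_eq_mul]
      _ ≤ (N:ℝ) * (Real.exp (c*M) * Real.exp (-c)) :=
          mul_le_mul_of_nonneg_right hcardc (by positivity)
  have hSge : T.card * Real.exp (c * M) ≤ S := by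
    rw [hSsplit]; linarith
  have hSpos : 0 < S := lt_of_lt_of_le (by positivity) hSge
  have hSge1 : Real.exp (c*M) ≤ S := le_trans (by nlinarith [Real.exp_pos (c*M)]) hSge
  simp only [softmax, hardmax, Pi.smul_apply, smul_eq_mul, ← hMdef, ← hT, ← hS]
  by_cases hv : v i = M
  · rw [if_pos hv, hv]
    have key : Real.exp (c*M)/S ≤ 1/(T.card:ℝ) := by
      rw [div_le_div_iff₀ hSpos hKpos]
      nlinarith
    rw [abs_of_nonpos (by linarith), neg_sub]
    have heq : 1/(T.card:ℝ) - Real.exp (c*M)/S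
        = (S - T.card * Real.exp (c*M))/(T.card * S) := by
      field_simp
    rw [heq, div_le_iff₀ (by positivity)]
    have hec := Real.exp_pos (-c)
    have hexp := Real.exp_pos (c*M)
    have h2 : Real.exp (c*M) ≤ T.card * S :=
      le_trans hSge1 (le_mul_of_one_le_left hSpos.le hK1')
    nlinarith [mul_le_mul_of_nonneg_left h2 (mul_nonneg (le_trans zero_le_one hN1) hec.le)]
  · rw [if_neg hv, sub_zero, abs_of_nonneg (by positivity)]
    have hg := hgap i hv
    have hexpi : Real.exp (c * v i) ≤ Real.exp (c*M) * Real.exp (-c) := by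
      rw [← Real.exp_add]
      apply Real.exp_le_exp.mpr
      nlinarith
    rw [div_le_iff₀ hSpos]
    have hec := Real.exp_pos (-c)
    have hexp := Real.exp_pos (c*M)
    nlinarith [mul_le_mul_of_nonneg_right hSge1 hec.le,
      mul_nonneg (mul_nonneg (sub_nonneg.mpr hN1) hSpos.le) hec.le]
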